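/- arXiv:2002.04190 — 2 statements merged into one kernel-verified Lean document; each statement's English description precedes it below -/
import Mathlib

section
/- Let (a_n) be an arithmetic sequence with ratios q_n and x ∈ 𝕋 with canonical representation x = Σ c_n/a_n. If x is a topological s-torsion element (a_n x → 0 statistically in 𝕋) and A ⊆ supp(x) is a q-divergent set with positive upper density, then there exists B ⊆ A with d(A \ B) = 0 such that lim_{n ∈ B} c_n/q_n = 0 in 𝕋. -/
open Filter Topology Set

/-- Upper natural density of a set of naturals. -/
noncomputable def upperDensity (A : Set ℕ) : ℝ :=
  Filter.limsup (fun n => (Nat.card ↥(A ∩ Set.Iio n) : ℝ) / n) Filter.atTop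

/-- `A` has natural density `δ`. -/
def HasDensity (A : Set ℕ) (δ : ℝ) : Prop :=
  Filter.Tendsto (fun n => (Nat.card ↥(A ∩ Set.Iio n) : ℝ) / n) Filter.atTop (nhds δ)

/-- Statistical convergence of a real sequence. -/
def StatTendsto (x : ℕ → ℝ) (ξ : ℝ) : Prop :=
  ∀ ε : ℝ, 0 < ε → HasDensity {n | ε ≤ |x n - ξ|} 0

/-- An arithmetic sequence: `a 0 = 1 < a 1 < a 2 < ⋯` and `a n ∣ a (n+1)`. -/
def IsArithmeticSeq (a : ℕ → ℕ) : Prop :=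
  a 0 = 1 ∧ StrictMono a ∧ ∀ n, a n ∣ a (n + 1)

/-- The ratio `q n = a n / a (n-1)` as a real number. -/
noncomputable def qr (a : ℕ → ℕ) (n : ℕ) : ℝ := (a n : ℝ) / (a (n - 1) : ℝ)

/-- `(c n)` is a canonical representation sequence w.r.t. `(a n)`:
`0 ≤ c n < q n` and `c n < q n - 1` for infinitely many `n`. -/
def IsCanonicalRep (a : ℕ → ℕ) (c : ℕ → ℕ) : Prop :=
  c 0 = 0 ∧ (∀ n, 1 ≤ n → c n < a n / a (n - 1)) ∧
    (∀ N, ∃ n, N ≤ n ∧ 1 ≤ n ∧ c n + 1 < a n / a (n - 1))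

/-- Support of (the canonical representation of) `x`. -/
def suppRep (c : ℕ → ℕ) : Set ℕ := {n | 1 ≤ n ∧ c n ≠ 0}

/-- `supp_q(x) = {n : c n = q n - 1}`. -/
def suppqRep (a c : ℕ → ℕ) : Set ℕ := {n | 1 ≤ n ∧ c n + 1 = a n / a (n - 1)}

/-- A set `S ⊆ ℕ` is `q`-bounded if `(q n)` is bounded on `S`. -/
def QBounded (a : ℕ → ℕ) (S : Set ℕ) : Prop := ∃ M, ∀ n ∈ S, a n / a (n - 1) ≤ M

/-- A set `S ⊆ ℕ` is `q`-divergent if `q n → ∞` along `n ∈ S`. -/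
def QDivergent (a : ℕ → ℕ) (S : Set ℕ) : Prop :=
  Filter.Tendsto (fun n => a n / a (n - 1)) (Filter.atTop ⊓ Filter.principal S) Filter.atTop

/-- Statistical convergence in a topological space, via neighborhoods. -/
def StatNhdTendsto {α : Type*} [TopologicalSpace α] (y : ℕ → α) (ℓ : α) : Prop :=
  ∀ U ∈ nhds ℓ, HasDensity {n | y n ∉ U} 0

section Aux
variable {a c : ℕ → ℕ}

lemma aux_apos (ha : IsArithmeticSeq a) (n : ℕ) : 0 < a n := by
  have h0 := ha.1
  have := ha.2.1.monotone (Nat.zero_le n)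
  omega

lemma aux_dvd (ha : IsArithmeticSeq a) {i j : ℕ} (h : i ≤ j) : a i ∣ a j := by
  induction j with
  | zero => simpa [Nat.le_zero.mp h]
  | succ j ih =>
    rcases Nat.lt_or_ge i (j+1) with h' | h'
    · exact (ih (by omega)).trans (ha.2.2 j)
    · have : i = j + 1 := by omega
      simp [this]

lemma aux_mul_q (ha : IsArithmeticSeq a) (n : ℕ) (hn : 1 ≤ n) :
    a (n-1) * (a n / a (n-1)) = a n :=
  Nat.mul_div_cancel' (aux_dvd ha (by omega))

/-- single-term bound: for `n ≥ 1`, `c n / a n ≤ 1/a (n-1) - 1/a n`. -/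
lemma aux_term_le (ha : IsArithmeticSeq a) (hc : IsCanonicalRep a c) (n : ℕ) (hn : 1 ≤ n) :
    (c n : ℝ) / (a n : ℝ) ≤ 1 / (a (n-1) : ℝ) - 1 / (a n : ℝ) := by
  have hq := aux_mul_q ha n hn
  have hcq := hc.2.1 n hn
  have h1 : 0 < a (n-1) := aux_apos ha _
  have h2 : 0 < a n := aux_apos ha _
  have hcast : ((a (n-1) : ℝ)) * ((a n / a (n-1) : ℕ) : ℝ) = (a n : ℝ) := by exact_mod_cast hq
  have hcr : (c n : ℝ) ≤ ((a n / a (n-1) : ℕ) : ℝ) - 1 := by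
    have : (c n : ℝ) + 1 ≤ ((a n / a (n-1) : ℕ) : ℝ) := by exact_mod_cast hcq
    linarith
  have h1r : (0:ℝ) < (a (n-1) : ℝ) := by exact_mod_cast h1
  have h2r : (0:ℝ) < (a n : ℝ) := by exact_mod_cast h2
  rw [div_le_iff₀ h2r]
  have : (1 / (a (n-1) : ℝ) - 1 / (a n : ℝ)) * (a n : ℝ)
      = ((a n / a (n-1) : ℕ) : ℝ) - 1 := by
    rw [← hcast]
    have hd : ((a n / a (n-1) : ℕ) : ℝ) ≠ 0 := by
      have : 0 < a n / a (n-1) := by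
        have := aux_apos ha n
        omega
      exact_mod_cast this.ne'
    field_simp
  rw [this]
  exact hcr

lemma aux_summable (ha : IsArithmeticSeq a) (hc : IsCanonicalRep a c) :
    Summable (fun k => (c k : ℝ) / (a k : ℝ)) := by
  rw [← summable_nat_add_iff 1]
  apply summable_of_sum_range_le (c := 1)
  · intro n
    positivity
  · intro K
    calc ∑ i ∈ Finset.range K, (c (i+1) : ℝ) / (a (i+1) : ℝ)
        ≤ ∑ i ∈ Finset.range K, (1 / (a i : ℝ) - 1 / (a (i+1) : ℝ)) := by
          apply Finset.sum_le_sum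
          intro i _
          simpa using aux_term_le ha hc (i+1) (by omega)
      _ = 1 / (a 0 : ℝ) - 1 / (a K : ℝ) := Finset.sum_range_sub' (fun i => 1 / (a i : ℝ)) K
      _ ≤ 1 := by
          have h0 : (0:ℝ) ≤ 1 / (a K : ℝ) := by positivity
          rw [ha.1]
          push_cast
          linarith

set_option maxHeartbeats 1000000 in
/-- tail bound: `∑' k, c (k+(n+1)) / a (k+(n+1)) ≤ 1 / a n`. -/
lemma aux_tail_le (ha : IsArithmeticSeq a) (hc : IsCanonicalRep a c) (n : ℕ) :
    ∑' k, (c (k + (n+1)) : ℝ) / (a (k + (n+1)) : ℝ) ≤ 1 / (a n : ℝ) := by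
  have hsum : Summable (fun k => (c (k + (n+1)) : ℝ) / (a (k + (n+1)) : ℝ)) :=
    (summable_nat_add_iff (n+1)).mpr (aux_summable ha hc)
  apply Summable.tsum_le_of_sum_range_le hsum
  intro K
  calc ∑ i ∈ Finset.range K, (c (i + (n+1)) : ℝ) / (a (i + (n+1)) : ℝ)
      ≤ ∑ i ∈ Finset.range K, (1 / (a (i + n) : ℝ) - 1 / (a (i + 1 + n) : ℝ)) := by
        apply Finset.sum_le_sum
        intro i _
        have h := aux_term_le ha hc (i + (n+1)) (by omega)
        have e1 : i + (n+1) - 1 = i + n := by omega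
        have e2 : i + 1 + n = i + (n+1) := by omega
        rw [e1] at h
        rw [e2]
        exact h
    _ = 1 / (a (0 + n) : ℝ) - 1 / (a (K + n) : ℝ) :=
        Finset.sum_range_sub' (fun i => 1 / (a (i + n) : ℝ)) K
    _ ≤ 1 / (a n : ℝ) := by
        have : (0:ℝ) < (a (K + n) : ℝ) := by exact_mod_cast aux_apos ha _
        simp only [Nat.zero_add]
        have h0 : (0:ℝ) ≤ 1 / (a (K+n) : ℝ) := by positivity
        linarith

end Aux

section Key
variable {a c : ℕ → ℕ}

lemma aux_coe_nat_zero (m : ℕ) : (((m : ℝ)) : AddCircle (1:ℝ)) = 0 := by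
  rw [AddCircle.coe_eq_zero_iff]
  exact ⟨m, by simp⟩

set_option maxHeartbeats 1000000 in
/-- Key identity: `a (n-1) • x = c n / q n + a (n-1) * (tail)` in the circle. -/
lemma aux_key (ha : IsArithmeticSeq a) (hc : IsCanonicalRep a c) (n : ℕ) (hn : 1 ≤ n) :
    (a (n-1)) • (((∑' k, (c k : ℝ) / (a k : ℝ)) : ℝ) : AddCircle (1:ℝ))
      = ((((c n : ℝ) / qr a n
          + (a (n-1) : ℝ) * ∑' k, (c (k + (n+1)) : ℝ) / (a (k + (n+1)) : ℝ)) : ℝ)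
            : AddCircle (1:ℝ)) := by
  have hsum := aux_summable ha hc
  set f : ℕ → ℝ := fun k => (c k : ℝ) / (a k : ℝ) with hf
  have hsplit : ∑' k, f k = (∑ i ∈ Finset.range n, f i) + ∑' k, f (k + n) :=
    (Summable.sum_add_tsum_nat_add n hsum).symm
  have hsum_n : Summable fun k => f (k + n) := (summable_nat_add_iff n).mpr hsum
  have hzero : ∑' k, f (k + n) = f n + ∑' k, f (k + (n+1)) := by
    have h1 : ∑' k, f (k + n) = f (0 + n) + ∑' k, f ((k + 1) + n) := by
      exact Summable.tsum_eq_zero_add hsum_n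
    rw [h1]
    congr 1
    · simp
    · apply tsum_congr
      intro k
      congr 1 <;> omega
  -- the integer part
  have hint : ∀ i < n, (a (n-1) : ℝ) * f i = ((c i * (a (n-1) / a i) : ℕ) : ℝ) := by
    intro i hi
    have hdvd : a i ∣ a (n-1) := aux_dvd ha (by omega)
    have hai : (0:ℝ) < (a i : ℝ) := by exact_mod_cast aux_apos ha i
    have : ((a (n-1) / a i : ℕ) : ℝ) = (a (n-1) : ℝ) / (a i : ℝ) := by
      rw [Nat.cast_div hdvd hai.ne']
    push_cast [this, hf]
    field_simp
  have hM : ((∑ i ∈ Finset.range n, (c i * (a (n-1) / a i)) : ℕ) : ℝ)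
      = (a (n-1) : ℝ) * ∑ i ∈ Finset.range n, f i := by
    push_cast
    rw [Finset.mul_sum]
    apply Finset.sum_congr rfl
    intro i hi
    have := hint i (Finset.mem_range.mp hi)
    push_cast at this
    linarith [this]
  have hfn : (a (n-1) : ℝ) * f n = (c n : ℝ) / qr a n := by
    have h2 : (0:ℝ) < (a n : ℝ) := by exact_mod_cast aux_apos ha n
    have h1 : (0:ℝ) < (a (n-1) : ℝ) := by exact_mod_cast aux_apos ha (n-1)
    rw [hf]
    simp only [qr]
    rw [div_div_eq_mul_div]
    field_simp
  -- now compute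
  rw [← AddCircle.coe_nsmul]
  rw [hsplit, hzero]
  have : (a (n-1)) • ((∑ i ∈ Finset.range n, f i) + (f n + ∑' k, f (k + (n+1))))
      = ((∑ i ∈ Finset.range n, (c i * (a (n-1) / a i)) : ℕ) : ℝ)
        + ((c n : ℝ) / qr a n + (a (n-1) : ℝ) * ∑' k, f (k + (n+1))) := by
    rw [hM, hfn.symm]
    push_cast
    ring
  rw [this, AddCircle.coe_add, aux_coe_nat_zero, zero_add]

end Key

section Dist
variable {a c : ℕ → ℕ}

lemma aux_norm_coe_le (r : ℝ) : ‖((r : ℝ) : AddCircle (1:ℝ))‖ ≤ |r| := by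
  rw [AddCircle.norm_eq]
  simpa using round_le r 0

set_option maxHeartbeats 1000000 in
lemma aux_dist (ha : IsArithmeticSeq a) (hc : IsCanonicalRep a c) (n : ℕ) (hn : 1 ≤ n) :
    ‖(((c n : ℝ) / qr a n : ℝ) : AddCircle (1:ℝ))
        - (a (n-1)) • (((∑' k, (c k : ℝ) / (a k : ℝ)) : ℝ) : AddCircle (1:ℝ))‖
      ≤ ((a n / a (n-1) : ℕ) : ℝ)⁻¹ := by
  rw [aux_key ha hc n hn, ← AddCircle.coe_sub]
  set r : ℝ := (a (n-1) : ℝ) * ∑' k, (c (k + (n+1)) : ℝ) / (a (k + (n+1)) : ℝ) with hr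
  have he : (c n : ℝ) / qr a n - ((c n : ℝ) / qr a n + r) = -r := by ring
  rw [he]
  have h2 : (0:ℝ) < (a n : ℝ) := by exact_mod_cast aux_apos ha n
  have h1 : (0:ℝ) < (a (n-1) : ℝ) := by exact_mod_cast aux_apos ha (n-1)
  have htail0 : 0 ≤ ∑' k, (c (k + (n+1)) : ℝ) / (a (k + (n+1)) : ℝ) :=
    tsum_nonneg (fun k => by positivity)
  have htail : ∑' k, (c (k + (n+1)) : ℝ) / (a (k + (n+1)) : ℝ) ≤ 1 / (a n : ℝ) := by
    have := aux_tail_le ha hc (n-1+1)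
    have hn1 : n - 1 + 1 = n := by omega
    rw [hn1] at this
    exact this
  have hr0 : 0 ≤ r := by positivity
  have hrle : r ≤ (a (n-1) : ℝ) / (a n : ℝ) := by
    rw [hr]
    calc (a (n-1) : ℝ) * ∑' k, (c (k + (n+1)) : ℝ) / (a (k + (n+1)) : ℝ)
        ≤ (a (n-1) : ℝ) * (1 / (a n : ℝ)) := by
          exact mul_le_mul_of_nonneg_left htail h1.le
      _ = (a (n-1) : ℝ) / (a n : ℝ) := by ring
  have hqinv : ((a n / a (n-1) : ℕ) : ℝ)⁻¹ = (a (n-1) : ℝ) / (a n : ℝ) := by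
    have hq := aux_mul_q ha n hn
    have hcast : ((a (n-1) : ℝ)) * ((a n / a (n-1) : ℕ) : ℝ) = (a n : ℝ) := by exact_mod_cast hq
    have hd : (0:ℝ) < ((a n / a (n-1) : ℕ) : ℝ) := by
      have : 0 < a n / a (n-1) :=
        Nat.div_pos (ha.2.1.monotone (by omega)) (aux_apos ha _)
      exact_mod_cast this
    field_simp
    linarith
  rw [hqinv]
  calc ‖((-r : ℝ) : AddCircle (1:ℝ))‖ ≤ |(-r)| := aux_norm_coe_le _
    _ = r := by rw [abs_neg, abs_of_nonneg hr0]
    _ ≤ _ := hrle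

end Dist

section Dens

lemma dens_subset {s t : Set ℕ} (h : s ⊆ t) (ht : HasDensity t 0) : HasDensity s 0 := by
  apply squeeze_zero (g := fun n => (Nat.card ↥(t ∩ Set.Iio n) : ℝ) / n) (fun n => by positivity)
    (fun n => ?_) ht
  have hc : Nat.card ↥(s ∩ Set.Iio n) ≤ Nat.card ↥(t ∩ Set.Iio n) :=
    Nat.card_mono ((Set.finite_Iio n).subset inter_subset_right) (inter_subset_inter_left _ h)
  simp only [div_eq_mul_inv]
  exact mul_le_mul_of_nonneg_right (by exact_mod_cast hc) (by positivity)

lemma dens_shift {D : Set ℕ} (hD : HasDensity D 0) :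
    HasDensity {n | 1 ≤ n ∧ n - 1 ∈ D} 0 := by
  apply squeeze_zero (g := fun m => (Nat.card ↥(D ∩ Set.Iio m) : ℝ) / m) (fun n => by positivity)
    (fun m => ?_) hD
  have hc : Nat.card ↥({n | 1 ≤ n ∧ n - 1 ∈ D} ∩ Set.Iio m)
      ≤ Nat.card ↥(D ∩ Set.Iio m) := by
    rw [Nat.card_coe_set_eq, Nat.card_coe_set_eq]
    have hsub : {n | 1 ≤ n ∧ n - 1 ∈ D} ∩ Set.Iio m ⊆ (fun k => k + 1) '' (D ∩ Set.Iio m) := by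
      rintro n ⟨⟨hn1, hnD⟩, hnm⟩
      refine ⟨n - 1, ⟨hnD, by simp only [Set.mem_Iio] at hnm ⊢; omega⟩, ?_⟩
      show n - 1 + 1 = n
      omega
    calc ({n | 1 ≤ n ∧ n - 1 ∈ D} ∩ Set.Iio m).ncard
        ≤ ((fun k => k + 1) '' (D ∩ Set.Iio m)).ncard :=
          Set.ncard_le_ncard hsub (((Set.finite_Iio m).subset inter_subset_right).image _)
      _ = (D ∩ Set.Iio m).ncard := Set.ncard_image_of_injective _ (add_left_injective 1)
  simp only [div_eq_mul_inv]
  exact mul_le_mul_of_nonneg_right (by exact_mod_cast hc) (by positivity)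

end Dens

section Diag

set_option maxHeartbeats 1000000 in
lemma aux_diag (z : ℕ → ℝ) (h : ∀ ε : ℝ, 0 < ε → HasDensity {n | ε ≤ z n} 0) :
    ∃ D : Set ℕ, HasDensity D 0 ∧ ∀ ε : ℝ, 0 < ε → ∃ N, ∀ n, N ≤ n → n ∉ D → z n < ε := by
  set E : ℕ → Set ℕ := fun k => {n | 1 / ((k:ℝ)+1) ≤ z n} with hE
  have hEd : ∀ k, HasDensity (E k) 0 := fun k => h _ (by positivity)
  have hEmono : ∀ {k l : ℕ}, k ≤ l → E k ⊆ E l := by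
    intro k l hkl n hn
    simp only [hE, Set.mem_setOf_eq] at hn ⊢
    have : 1 / ((l:ℝ)+1) ≤ 1 / ((k:ℝ)+1) := by
      apply one_div_le_one_div_of_le (by positivity)
      exact_mod_cast by omega
    linarith
  have hex : ∀ k : ℕ, ∃ N, ∀ m, N ≤ m →
      (Nat.card ↥(E k ∩ Set.Iio m) : ℝ) / m < 1 / ((k:ℝ)+1) := by
    intro k
    have := (hEd k).eventually_lt_const (show (0:ℝ) < 1 / ((k:ℝ)+1) by positivity)
    rw [eventually_atTop] at this
    obtain ⟨N, hN⟩ := this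
    exact ⟨N, fun m hm => hN m hm⟩
  choose F hF using hex
  set N : ℕ → ℕ := fun k => k + (Finset.range (k+1)).sup F with hN
  have hNk : ∀ k, k ≤ N k := fun k => Nat.le_add_right _ _
  have hNF : ∀ k, F k ≤ N k := fun k =>
    le_add_of_le_right (Finset.le_sup (Finset.self_mem_range_succ k))
  have hNmono : Monotone N := by
    intro k l hkl
    exact add_le_add hkl (Finset.sup_mono (Finset.range_subset_range.mpr (by omega)))
  refine ⟨⋃ k, E k ∩ {n | N k ≤ n}, ?_, ?_⟩
  · -- density zero
    rw [HasDensity, Metric.tendsto_atTop]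
    intro ε hε
    obtain ⟨k, hk⟩ := exists_nat_one_div_lt hε
    refine ⟨N k, fun m hm => ?_⟩
    -- find greatest j with N j ≤ m
    set P : ℕ → Prop := fun j => N j ≤ m with hP
    have hPk : P k := hm
    have hkb : k ≤ m + 1 := by
      have := (hNk k).trans hm
      omega
    set j := Nat.findGreatest P (m+1) with hj
    have hPj : P j := Nat.findGreatest_spec hkb hPk
    have hkj : k ≤ j := Nat.le_findGreatest hkb hPk
    have hjm : j ≤ m := (hNk j).trans hPj
    have hnot : ¬ P (j+1) := Nat.findGreatest_is_greatest (n := m+1) (by omega) (by omega)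
    -- subset bound
    have hsub : (⋃ i, E i ∩ {n | N i ≤ n}) ∩ Set.Iio m ⊆ E j ∩ Set.Iio m := by
      rintro n ⟨hnU, hnm⟩
      obtain ⟨i, hni, hNi⟩ := by simpa using hnU
      refine ⟨?_, hnm⟩
      rcases le_or_gt i j with hij | hij
      · exact hEmono hij hni
      · exfalso
        have : N (j+1) ≤ N i := hNmono (by omega)
        have hnm' : n < m := hnm
        simp only [hP, not_le] at hnot
        omega
    have hcard : (Nat.card ↥((⋃ i, E i ∩ {n | N i ≤ n}) ∩ Set.Iio m) : ℝ)
        ≤ (Nat.card ↥(E j ∩ Set.Iio m) : ℝ) := by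
      exact_mod_cast Nat.card_mono ((Set.finite_Iio m).subset inter_subset_right) hsub
    have hFj : F j ≤ m := (hNF j).trans hPj
    have hlt := hF j m hFj
    have h0 : (0:ℝ) ≤ (Nat.card ↥((⋃ i, E i ∩ {n | N i ≤ n}) ∩ Set.Iio m) : ℝ) / m := by
      positivity
    have hmono1 : 1 / ((j:ℝ)+1) ≤ 1 / ((k:ℝ)+1) := by
      apply one_div_le_one_div_of_le (by positivity)
      exact_mod_cast by omega
    have hdivle : (Nat.card ↥((⋃ i, E i ∩ {n | N i ≤ n}) ∩ Set.Iio m) : ℝ) / m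
        ≤ (Nat.card ↥(E j ∩ Set.Iio m) : ℝ) / m := by
      simp only [div_eq_mul_inv]
      exact mul_le_mul_of_nonneg_right hcard (by positivity)
    rw [Real.dist_eq, sub_zero, abs_of_nonneg h0]
    calc (Nat.card ↥((⋃ i, E i ∩ {n | N i ≤ n}) ∩ Set.Iio m) : ℝ) / m
        ≤ (Nat.card ↥(E j ∩ Set.Iio m) : ℝ) / m := hdivle
      _ < 1 / ((j:ℝ)+1) := hlt
      _ ≤ 1 / ((k:ℝ)+1) := hmono1
      _ < ε := hk
  · -- convergence off D
    intro ε hε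
    obtain ⟨k, hk⟩ := exists_nat_one_div_lt hε
    refine ⟨N k, fun n hn hnD => ?_⟩
    have : n ∉ E k := by
      intro hnE
      exact hnD (Set.mem_iUnion.mpr ⟨k, hnE, hn⟩)
    simp only [hE, Set.mem_setOf_eq, not_le] at this
    linarith

end Diag

set_option maxHeartbeats 1000000 in
/-- If `x` is a topological `s`-torsion element and `A ⊆ supp(x)` is a
`q`-divergent set of positive upper density, then `c_n/q_n → 0` in `𝕋` along
some `B ⊆ A` with `d(A \ B) = 0`. -/
theorem cq_tendsto_zero_circle_of_sTorsion (a c : ℕ → ℕ) (ha : IsArithmeticSeq a)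
    (hc : IsCanonicalRep a c) (x : AddCircle (1 : ℝ))
    (hx : x = ((∑' n, (c n : ℝ) / (a n : ℝ) : ℝ) : AddCircle (1 : ℝ)))
    (hs : StatNhdTendsto (fun n => a n • x) (0 : AddCircle (1 : ℝ)))
    (A : Set ℕ) (hAsupp : A ⊆ suppRep c) (hA : 0 < upperDensity A)
    (hqd : QDivergent a A) :
    ∃ B ⊆ A, HasDensity (A \ B) 0 ∧
      Filter.Tendsto (fun n => (((c n : ℝ) / qr a n : ℝ) : AddCircle (1 : ℝ)))
        (Filter.atTop ⊓ Filter.principal B) (nhds 0) := by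
  classical
  have hball : ∀ ε : ℝ, 0 < ε → HasDensity {n | ε ≤ ‖a n • x‖} 0 := by
    intro ε hε
    have h1 := hs (Metric.ball (0 : AddCircle (1:ℝ)) ε) (Metric.ball_mem_nhds _ hε)
    have hseteq : {n | (fun n => a n • x) n ∉ Metric.ball (0 : AddCircle (1:ℝ)) ε}
        = {n | ε ≤ ‖a n • x‖} := by
      ext n
      simp [Metric.mem_ball, dist_zero_right, not_lt]
    rwa [hseteq] at h1
  obtain ⟨D, hDd, hDconv⟩ := aux_diag (fun n => ‖a n • x‖) hball
  set D' : Set ℕ := {n | 1 ≤ n ∧ n - 1 ∈ D} with hD'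
  refine ⟨A \ D', Set.diff_subset, ?_, ?_⟩
  · apply dens_subset ?_ (dens_shift hDd)
    rintro n ⟨hnA, hn2⟩
    by_contra hcon
    exact hn2 ⟨hnA, hcon⟩
  · rw [tendsto_zero_iff_norm_tendsto_zero]
    set l := Filter.atTop ⊓ Filter.principal (A \ D') with hl
    have hle : l ≤ Filter.atTop ⊓ Filter.principal A :=
      inf_le_inf_left _ (principal_mono.mpr Set.diff_subset)
    have hq' : Filter.Tendsto (fun n => ((a n / a (n-1) : ℕ) : ℝ)⁻¹) l (nhds 0) := by
      have h1 : Filter.Tendsto (fun n => a n / a (n-1)) l Filter.atTop := hqd.mono_left hle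
      have h2 : Filter.Tendsto (fun n => ((a n / a (n-1) : ℕ) : ℝ)) l Filter.atTop :=
        tendsto_natCast_atTop_atTop.comp h1
      exact tendsto_inv_atTop_zero.comp h2
    have hz : Filter.Tendsto (fun n => ‖(a (n-1)) • x‖) l (nhds 0) := by
      rw [Metric.tendsto_nhds]
      intro ε hε
      obtain ⟨N, hN⟩ := hDconv ε hε
      rw [hl, eventually_inf_principal]
      filter_upwards [eventually_ge_atTop (N+1)] with n hn hnB
      have hn1 : 1 ≤ n := by omega
      have hnD : n - 1 ∉ D := by
        intro hmem
        exact hnB.2 ⟨hn1, hmem⟩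
      have := hN (n-1) (by omega) hnD
      rw [Real.dist_eq, sub_zero, abs_of_nonneg (norm_nonneg _)]
      exact this
    have hsumT : Filter.Tendsto
        (fun n => ((a n / a (n-1) : ℕ) : ℝ)⁻¹ + ‖(a (n-1)) • x‖) l (nhds 0) := by
      simpa using hq'.add hz
    apply squeeze_zero' (Filter.Eventually.of_forall (fun n => norm_nonneg _)) ?_ hsumT
    rw [hl, eventually_inf_principal]
    apply Filter.Eventually.of_forall
    intro n hnB
    have hn1 : 1 ≤ n := (hAsupp hnB.1).1
    have key := aux_dist ha hc n hn1
    rw [← hx] at key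
    calc ‖(((c n : ℝ) / qr a n : ℝ) : AddCircle (1:ℝ))‖
        = ‖((((c n : ℝ) / qr a n : ℝ) : AddCircle (1:ℝ)) - (a (n-1)) • x) + (a (n-1)) • x‖ := by
          rw [sub_add_cancel]
      _ ≤ ‖(((c n : ℝ) / qr a n : ℝ) : AddCircle (1:ℝ)) - (a (n-1)) • x‖ + ‖(a (n-1)) • x‖ :=
          norm_add_le _ _
      _ ≤ ((a n / a (n-1) : ℕ) : ℝ)⁻¹ + ‖(a (n-1)) • x‖ := add_le_add key le_rfl
end

section
/- A sequence (q_n) of natural numbers has the d-splitting property if and only if there exists a natural number M such that for every m > M, the set {n ∈ ℕ : M ≤ q_n ≤ m} has natural density zero. -/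
open Filter Topology Set

/-- The `d`-splitting property of a sequence `(q n)` of naturals. -/
def HasDSplitting (q : ℕ → ℕ) : Prop :=
  ∃ B D : Set ℕ, B ∪ D = Set.univ ∧ Disjoint B D ∧
    (B = ∅ ∨ 0 < upperDensity B) ∧ (D = ∅ ∨ 0 < upperDensity D) ∧
    (0 < upperDensity B →
      ∃ B' : Set ℕ, HasDensity (symmDiff B B') 0 ∧ ∃ M, ∀ n ∈ B', q n ≤ M) ∧
    (0 < upperDensity D →
      ∃ D' : Set ℕ, HasDensity (symmDiff D D') 0 ∧
        Filter.Tendsto q (Filter.atTop ⊓ Filter.principal D') Filter.atTop)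

/-- The splitting property of a sequence `(q n)` of naturals. -/
def HasSplitting (q : ℕ → ℕ) : Prop :=
  ∃ B I : Set ℕ, B ∪ I = Set.univ ∧ Disjoint B I ∧
    (B = ∅ ∨ B.Infinite) ∧ (I = ∅ ∨ I.Infinite) ∧
    (B.Infinite → ∃ M, ∀ n ∈ B, q n ≤ M) ∧
    (I.Infinite → Filter.Tendsto q (Filter.atTop ⊓ Filter.principal I) Filter.atTop)

lemma ratio_nonneg (A : Set ℕ) (n : ℕ) : 0 ≤ (Nat.card ↥(A ∩ Set.Iio n) : ℝ) / n := by
  positivity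

lemma div_nat_mono {a b : ℝ} (n : ℕ) (ha : 0 ≤ a) (h : a ≤ b) : a / n ≤ b / n := by
  apply div_le_div_of_nonneg_right h
  exact Nat.cast_nonneg n

lemma card_inter_Iio_le (A : Set ℕ) (n : ℕ) : Nat.card ↥(A ∩ Set.Iio n) ≤ n := by
  have h := Nat.card_mono (Set.finite_Iio n) (Set.inter_subset_right (s := A) (t := Set.Iio n))
  simpa using h

lemma ratio_le_one (A : Set ℕ) (n : ℕ) : (Nat.card ↥(A ∩ Set.Iio n) : ℝ) / n ≤ 1 := by
  rcases Nat.eq_zero_or_pos n with rfl | hn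
  · simp
  · rw [div_le_one (by exact_mod_cast hn)]
    exact_mod_cast card_inter_Iio_le A n

lemma hasDensity_zero_of_subset {A B : Set ℕ} (hAB : A ⊆ B) (hB : HasDensity B 0) :
    HasDensity A 0 := by
  refine squeeze_zero (fun n => ratio_nonneg A n) (fun n => ?_) hB
  refine div_nat_mono n (by positivity) ?_
  exact_mod_cast Nat.card_mono ((Set.finite_Iio n).inter_of_right B)
    (Set.inter_subset_inter_left _ hAB)

lemma hasDensity_zero_union {A B : Set ℕ} (hA : HasDensity A 0) (hB : HasDensity B 0) :
    HasDensity (A ∪ B) 0 := by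
  have h : Tendsto (fun n => (Nat.card ↥(A ∩ Set.Iio n) : ℝ) / n
      + (Nat.card ↥(B ∩ Set.Iio n) : ℝ) / n) atTop (𝓝 0) := by
    simpa using hA.add hB
  refine squeeze_zero (fun n => ratio_nonneg _ n) (fun n => ?_) h
  rw [← add_div]
  refine div_nat_mono n (by positivity) ?_
  have he : ((A ∪ B) ∩ Set.Iio n) = (A ∩ Set.Iio n) ∪ (B ∩ Set.Iio n) :=
    Set.union_inter_distrib_right A B (Set.Iio n)
  rw [he]
  rw [Nat.card_coe_set_eq, Nat.card_coe_set_eq, Nat.card_coe_set_eq]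
  exact_mod_cast Set.ncard_union_le _ _

lemma hasDensity_zero_of_finite {A : Set ℕ} (hA : A.Finite) : HasDensity A 0 := by
  have h : Tendsto (fun n : ℕ => (Nat.card A : ℝ) / n) atTop (𝓝 0) :=
    tendsto_const_div_atTop_nhds_zero_nat _
  refine squeeze_zero (fun n => ratio_nonneg _ n) (fun n => ?_) h
  refine div_nat_mono n (by positivity) ?_
  exact_mod_cast Nat.card_mono hA Set.inter_subset_left

lemma hasDensity_empty : HasDensity ∅ 0 := hasDensity_zero_of_finite Set.finite_empty

lemma upperDensity_univ : upperDensity Set.univ = 1 := by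
  unfold upperDensity
  have h : ∀ᶠ n : ℕ in atTop, (Nat.card ↥(Set.univ ∩ Set.Iio n) : ℝ) / n = 1 := by
    filter_upwards [eventually_ge_atTop 1] with n hn
    rw [Set.univ_inter]
    have hc : Nat.card (Set.Iio n) = n := by simp
    rw [hc, div_self]
    exact_mod_cast Nat.one_le_iff_ne_zero.mp hn
  rw [limsup_congr h, limsup_const]

lemma hasDensity_zero_of_upper_nonpos {A : Set ℕ} (h : upperDensity A ≤ 0) : HasDensity A 0 := by
  have hb : IsBoundedUnder (· ≤ ·) atTop (fun n => (Nat.card ↥(A ∩ Set.Iio n) : ℝ) / n) :=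
    ⟨1, eventually_map.2 (Eventually.of_forall (ratio_le_one A))⟩
  rw [HasDensity]
  apply tendsto_order.2
  constructor
  · intro a ha
    exact Eventually.of_forall fun n => lt_of_lt_of_le ha (ratio_nonneg A n)
  · intro a ha
    exact eventually_lt_of_limsup_lt (lt_of_le_of_lt h ha) hb

lemma key_lemma (S : Set ℕ) (q : ℕ → ℕ)
    (h : ∀ k, HasDensity {n | n ∈ S ∧ q n ≤ k} 0) :
    ∃ D' : Set ℕ, D' ⊆ S ∧ HasDensity (S \ D') 0 ∧
      Filter.Tendsto q (Filter.atTop ⊓ Filter.principal D') Filter.atTop := by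
  have hex : ∀ k : ℕ, ∃ N, k ≤ N ∧ ∀ x, N ≤ x →
      (Nat.card ↥({n | n ∈ S ∧ q n ≤ k} ∩ Set.Iio x) : ℝ) / x < 1 / (k + 1) := by
    intro k
    have hev : ∀ᶠ x in atTop,
        (Nat.card ↥({n | n ∈ S ∧ q n ≤ k} ∩ Set.Iio x) : ℝ) / x < 1 / (k + 1) :=
      (h k).eventually (gt_mem_nhds (by positivity))
    rcases eventually_atTop.1 hev with ⟨N, hN⟩
    exact ⟨max N k, le_max_right _ _, fun x hx => hN x (le_trans (le_max_left _ _) hx)⟩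
  choose N hNk hN using hex
  refine ⟨{n | n ∈ S ∧ ∀ k, N k ≤ n → k < q n}, fun n hn => hn.1, ?_, ?_⟩
  · have hsub : ∀ x : ℕ,
        (S \ {n | n ∈ S ∧ ∀ k, N k ≤ n → k < q n}) ∩ Set.Iio x ⊆
          {n | n ∈ S ∧ q n ≤ Nat.findGreatest (fun k => N k < x) x} ∩ Set.Iio x := by
      intro x n hn
      obtain ⟨⟨hnS, hnD⟩, hnx⟩ := hn
      simp only [Set.mem_setOf_eq, not_and, not_forall, not_lt] at hnD
      obtain ⟨k, hk1, hk2⟩ := hnD hnS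
      have hnxlt : n < x := hnx
      have hNkx : N k < x := lt_of_le_of_lt hk1 hnxlt
      have hkx : k ≤ x := le_of_lt (lt_of_le_of_lt (hNk k) hNkx)
      have hkK : k ≤ Nat.findGreatest (fun k => N k < x) x := Nat.le_findGreatest hkx hNkx
      exact ⟨⟨hnS, le_trans hk2 hkK⟩, hnx⟩
    rw [HasDensity, Metric.tendsto_atTop]
    intro ε hε
    obtain ⟨k₀, hk₀⟩ := exists_nat_one_div_lt hε
    refine ⟨N k₀ + 1, fun x hx => ?_⟩
    have hxpos : 0 < x := lt_of_lt_of_le (Nat.succ_pos _) hx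
    have hNx : N k₀ < x := lt_of_lt_of_le (Nat.lt_succ_self _) hx
    set K := Nat.findGreatest (fun k => N k < x) x with hKdef
    have hk₀x : k₀ ≤ x := le_of_lt (lt_of_le_of_lt (hNk k₀) hNx)
    have hk₀K : k₀ ≤ K := Nat.le_findGreatest hk₀x hNx
    have hPK : N K < x := Nat.findGreatest_spec (P := fun k => N k < x) hk₀x hNx
    have hcard : (Nat.card ↥((S \ {n | n ∈ S ∧ ∀ k, N k ≤ n → k < q n}) ∩ Set.Iio x) : ℝ)
        ≤ (Nat.card ↥({n | n ∈ S ∧ q n ≤ K} ∩ Set.Iio x) : ℝ) := by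
      exact_mod_cast Nat.card_mono ((Set.finite_Iio x).inter_of_right _) (hsub x)
    have hlt : (Nat.card ↥({n | n ∈ S ∧ q n ≤ K} ∩ Set.Iio x) : ℝ) / x < 1 / (K + 1) :=
      hN K x (le_of_lt hPK)
    have h1 : (1 : ℝ) / (K + 1) ≤ 1 / (k₀ + 1) := by
      apply one_div_le_one_div_of_le (by positivity)
      exact_mod_cast Nat.succ_le_succ hk₀K
    rw [Real.dist_eq, sub_zero, abs_of_nonneg (ratio_nonneg _ _)]
    calc (Nat.card ↥((S \ {n | n ∈ S ∧ ∀ k, N k ≤ n → k < q n}) ∩ Set.Iio x) : ℝ) / x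
        ≤ (Nat.card ↥({n | n ∈ S ∧ q n ≤ K} ∩ Set.Iio x) : ℝ) / x :=
          div_nat_mono x (by positivity) hcard
      _ < 1 / (K + 1) := hlt
      _ ≤ 1 / (k₀ + 1) := h1
      _ < ε := hk₀
  · rw [tendsto_atTop]
    intro b
    rw [eventually_inf_principal]
    filter_upwards [eventually_ge_atTop (N b)] with n hn hn'
    exact le_of_lt (hn'.2 b hn)

lemma symmDiff_empty_empty : HasDensity (symmDiff (∅ : Set ℕ) ∅) 0 := by
  simpa [symmDiff_self, Set.bot_eq_empty] using hasDensity_empty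

lemma tendsto_principal_empty (q : ℕ → ℕ) :
    Filter.Tendsto q (Filter.atTop ⊓ Filter.principal (∅ : Set ℕ)) Filter.atTop := by
  rw [Filter.principal_empty, inf_bot_eq]
  exact tendsto_bot

/-- Proposition: `(q n)` has the `d`-splitting property iff there is `M` such
that `{n : M ≤ q n ≤ m}` has density zero for every `m > M`. -/
theorem hasDSplitting_iff (q : ℕ → ℕ) :
    HasDSplitting q ↔
      ∃ M : ℕ, ∀ m, M < m → HasDensity {n | M ≤ q n ∧ q n ≤ m} 0 := by
  constructor
  · rintro ⟨B, D, hunion, hdisj, hBe, hDe, hB, hD⟩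
    obtain ⟨B'', hB''d, M₀, hB''⟩ :
        ∃ B'', HasDensity (symmDiff B B'') 0 ∧ ∃ M₀, ∀ n ∈ B'', q n ≤ M₀ := by
      rcases hBe with rfl | hpos
      · exact ⟨∅, symmDiff_empty_empty, 0, by simp⟩
      · exact hB hpos
    obtain ⟨D'', hD''d, hT⟩ :
        ∃ D'', HasDensity (symmDiff D D'') 0 ∧
          Filter.Tendsto q (Filter.atTop ⊓ Filter.principal D'') Filter.atTop := by
      rcases hDe with rfl | hpos
      · exact ⟨∅, symmDiff_empty_empty, tendsto_principal_empty q⟩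
      · exact hD hpos
    refine ⟨M₀ + 1, fun m hm => ?_⟩
    have hev : ∀ᶠ n in Filter.atTop, n ∈ D'' → m + 1 ≤ q n := by
      have := Filter.tendsto_atTop.1 hT (m + 1)
      rwa [Filter.eventually_inf_principal] at this
    obtain ⟨Nf, hNf⟩ := Filter.eventually_atTop.1 hev
    apply hasDensity_zero_of_subset
      (B := symmDiff B B'' ∪ (symmDiff D D'' ∪ Set.Iio Nf))
    · intro n hn
      obtain ⟨h1, h2⟩ := hn
      by_cases hnN : n < Nf
      · exact Or.inr (Or.inr hnN)
      push_neg at hnN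
      have hnB'' : n ∉ B'' := fun hnb => by
        have := hB'' n hnb; omega
      have hnu : n ∈ B ∪ D := hunion ▸ Set.mem_univ n
      rcases hnu with hnB | hnD
      · exact Or.inl (Set.mem_symmDiff.2 (Or.inl ⟨hnB, hnB''⟩))
      · by_cases hnD'' : n ∈ D''
        · have := hNf n hnN hnD''; omega
        · exact Or.inr (Or.inl (Set.mem_symmDiff.2 (Or.inl ⟨hnD, hnD''⟩)))
    · exact hasDensity_zero_union hB''d
        (hasDensity_zero_union hD''d (hasDensity_zero_of_finite (Set.finite_Iio Nf)))
  · rintro ⟨M, hM⟩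
    by_cases hB : 0 < upperDensity {n | q n < M}
    · by_cases hD : 0 < upperDensity {n | M ≤ q n}
      · -- main case
        obtain ⟨D', hD'sub, hD'dens, hD'tend⟩ := key_lemma {n | M ≤ q n} q (by
          intro k
          apply hasDensity_zero_of_subset (B := {n | M ≤ q n ∧ q n ≤ M + k + 1})
          · intro n hn
            exact ⟨hn.1, by have := hn.2; omega⟩
          · exact hM (M + k + 1) (by omega))
        refine ⟨{n | q n < M}, {n | M ≤ q n}, ?_, ?_, Or.inr hB, Or.inr hD, ?_, ?_⟩
        · ext n; simp [Nat.lt_or_ge (q n) M]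
        · rw [Set.disjoint_left]
          intro n h1 h2
          simp only [Set.mem_setOf_eq] at h1 h2
          omega
        · intro _
          refine ⟨{n | q n < M}, ?_, M, fun n hn => le_of_lt hn⟩
          simpa [symmDiff_self, Set.bot_eq_empty] using hasDensity_empty
        · intro _
          refine ⟨D', ?_, hD'tend⟩
          apply hasDensity_zero_of_subset (B := {n | M ≤ q n} \ D') ?_ hD'dens
          intro n hn
          rcases Set.mem_symmDiff.1 hn with ⟨h1, h2⟩ | ⟨h1, h2⟩
          · exact ⟨h1, h2⟩
          · exact absurd (hD'sub h1) h2
      · -- D has upper density 0 : B = univ, D = ∅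
        have hDd : HasDensity {n | M ≤ q n} 0 := hasDensity_zero_of_upper_nonpos (not_lt.1 hD)
        refine ⟨Set.univ, ∅, by simp, by simp,
          Or.inr (by rw [upperDensity_univ]; norm_num), Or.inl rfl, ?_, ?_⟩
        · intro _
          refine ⟨{n | q n < M}, ?_, M, fun n hn => le_of_lt hn⟩
          have he : symmDiff Set.univ {n | q n < M} = {n | M ≤ q n} := by
            ext n
            simp [Set.mem_symmDiff, Nat.not_lt]
          rw [he]; exact hDd
        · intro _
          exact ⟨∅, symmDiff_empty_empty, tendsto_principal_empty q⟩
    · -- B has upper density 0 : B = ∅, D = univ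
      have hBd : HasDensity {n | q n < M} 0 := hasDensity_zero_of_upper_nonpos (not_lt.1 hB)
      obtain ⟨D', hD'sub, hD'dens, hD'tend⟩ := key_lemma Set.univ q (by
        intro k
        apply hasDensity_zero_of_subset
          (B := {n | q n < M} ∪ {n | M ≤ q n ∧ q n ≤ M + k + 1})
        · intro n hn
          simp only [Set.mem_setOf_eq, Set.mem_univ, true_and] at hn
          rcases Nat.lt_or_ge (q n) M with h | h
          · exact Or.inl h
          · exact Or.inr ⟨h, by omega⟩
        · exact hasDensity_zero_union hBd (hM (M + k + 1) (by omega)))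
      refine ⟨∅, Set.univ, by simp, by simp, Or.inl rfl,
        Or.inr (by rw [upperDensity_univ]; norm_num), ?_, ?_⟩
      · intro _
        exact ⟨∅, symmDiff_empty_empty, 0, by simp⟩
      · intro _
        refine ⟨D', ?_, hD'tend⟩
        apply hasDensity_zero_of_subset (B := Set.univ \ D') ?_ hD'dens
        intro n hn
        rcases Set.mem_symmDiff.1 hn with ⟨h1, h2⟩ | ⟨h1, h2⟩
        · exact ⟨h1, h2⟩
        · exact absurd (Set.mem_univ n) h2
end
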